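/- arXiv:1409.5146 — 3 statements merged into one kernel-verified Lean document; each statement's English description precedes it below -/
import Mathlib

section
/- Let Γ be a connected k-regular graph on n vertices with d+1 distinct eigenvalues λ₀ > λ₁ > ⋯ > λ_d with multiplicities m₀ = 1, m₁, …, m_d, let πᵢ = Π_{j≠i} |λᵢ − λⱼ|, and let p_d be its highest-degree predistance polynomial. Then for every i = 1, …, d, one has (−1)^i p_d(λᵢ) πᵢ mᵢ = p_d(λ₀) π₀. -/
open Polynomial Finset
open scoped Classical

namespace SpectralExcessPaper

variable {V : Type*}

/-- `G` is distance-regular: it is connected and, for each `i`, the numbers of neighbors of `u`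
at distance `i-1`, `i`, `i+1` from `v` depend only on `i = dist u v`. -/
def IsDistanceRegular [Fintype V] (G : SimpleGraph V) : Prop :=
  G.Connected ∧ ∀ i : ℕ, ∃ ci ai bi : ℕ, ∀ u v : V, G.dist u v = i →
    ((G.neighborFinset u).filter fun w => G.dist w v = i - 1).card = ci ∧
    ((G.neighborFinset u).filter fun w => G.dist w v = i).card = ai ∧
    ((G.neighborFinset u).filter fun w => G.dist w v = i + 1).card = bi

/-- The adjacency matrix of the distance-`d` graph of `G`. -/
noncomputable def distMatrix [Fintype V] (G : SimpleGraph V) (d : ℕ) : Matrix V V ℝ :=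
  Matrix.of fun u v => if u ≠ v ∧ G.dist u v = d then (1 : ℝ) else 0

/-- The distance-`d` graph of `G`: same vertices, adjacent iff at distance exactly `d`. -/
def distGraph (G : SimpleGraph V) (d : ℕ) : SimpleGraph V where
  Adj u v := u ≠ v ∧ G.dist u v = d
  symm := by
    constructor
    intro u v h
    exact ⟨Ne.symm h.1, by rw [SimpleGraph.dist_comm]; exact h.2⟩
  loopless := by constructor; intro u h; exact h.1 rfl

/-- The average number `k̄_d` of vertices at distance exactly `d` from a vertex. -/
noncomputable def kdAvg [Fintype V] (G : SimpleGraph V) (n d : ℕ) : ℝ :=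
  (1 / (n : ℝ)) * ∑ u : V, (((univ : Finset V).filter fun v => G.dist u v = d).card : ℝ)

/-- `π_i = ∏_{j ≠ i} |λ_i - λ_j|`. -/
noncomputable def pim {d : ℕ} (lam : Fin (d + 1) → ℝ) (i : Fin (d + 1)) : ℝ :=
  ∏ j ∈ univ.erase i, |lam i - lam j|

/-- The scalar product `⟨r,s⟩_Γ = (1/n) ∑_i m_i r(λ_i) s(λ_i)`. -/
noncomputable def pip (n : ℕ) {d : ℕ} (m : Fin (d + 1) → ℕ) (lam : Fin (d + 1) → ℝ)
    (r s : Polynomial ℝ) : ℝ :=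
  (1 / (n : ℝ)) * ∑ i : Fin (d + 1), (m i : ℝ) * r.eval (lam i) * s.eval (lam i)

/-- Partial sums `q_i = p_0 + ⋯ + p_i` of the predistance polynomials. -/
noncomputable def qsum {d : ℕ} (p : Fin (d + 1) → Polynomial ℝ) (i : Fin (d + 1)) : Polynomial ℝ :=
  ∑ j ∈ univ.filter (fun j => j ≤ i), p j



private lemma pip_comb (n : ℕ) {d : ℕ} (m : Fin (d + 1) → ℕ) (lam : Fin (d + 1) → ℝ)
    (r t u : Polynomial ℝ) (c : ℝ) :
    pip n m lam r (t + C c * u) = pip n m lam r t + c * pip n m lam r u := by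
  simp only [pip, eval_add, eval_mul, eval_C, Finset.mul_sum, ← Finset.sum_add_distrib]
  exact Finset.sum_congr rfl fun j _ => by ring

private lemma orth_low (n : ℕ) {d : ℕ} (m : Fin (d + 1) → ℕ) (lam : Fin (d + 1) → ℝ)
    (p : Fin (d + 1) → Polynomial ℝ)
    (hpdeg : ∀ i : Fin (d + 1), (p i).degree = (i : ℕ))
    (hporth : ∀ i j : Fin (d + 1), i ≠ j → pip n m lam (p i) (p j) = 0) :
    ∀ s : Polynomial ℝ, s.degree < (d : ℕ) → pip n m lam (p (Fin.last d)) s = 0 := by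
  suffices H : ∀ N : ℕ, ∀ s : Polynomial ℝ, s.natDegree ≤ N → s.degree < (d : ℕ) →
      pip n m lam (p (Fin.last d)) s = 0 by
    intro s hs; exact H s.natDegree s le_rfl hs
  intro N
  induction N with
  | zero =>
    intro s hs hsd
    rcases eq_or_ne s 0 with rfl | hs0
    · simp [pip]
    · -- s has natDegree 0, hence degree 0 < d
      have hdeg : s.degree = (0 : ℕ) := by
        rw [Polynomial.degree_eq_natDegree hs0, Nat.le_zero.mp hs]
      have hd0 : 0 < d := by
        by_contra h
        have : d = 0 := by omega
        rw [this, hdeg] at hsd; simp at hsd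
      set j : Fin (d + 1) := ⟨0, by omega⟩ with hj
      have hpj : (p j).degree = (0 : ℕ) := hpdeg j
      have hpj0 : p j ≠ 0 := fun h => by simp [h] at hpj
      set c : ℝ := s.leadingCoeff / (p j).leadingCoeff with hc
      have hlc : (p j).leadingCoeff ≠ 0 := Polynomial.leadingCoeff_ne_zero.mpr hpj0
      have hcn : c ≠ 0 := div_ne_zero (Polynomial.leadingCoeff_ne_zero.mpr hs0) hlc
      have hdegC : (C c * p j).degree = s.degree := by
        rw [Polynomial.degree_C_mul hcn, hpj, hdeg]
      have hlcC : s.leadingCoeff = (C c * p j).leadingCoeff := by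
        rw [Polynomial.leadingCoeff_mul, Polynomial.leadingCoeff_C, hc,
          div_mul_cancel₀ _ hlc]
      have hsub : (s - C c * p j).degree < s.degree :=
        Polynomial.degree_sub_lt hdegC.symm hs0 hlcC
      have ht0 : s - C c * p j = 0 := by
        have h1 : (s - C c * p j).degree < ((0 : ℕ) : WithBot ℕ) := hdeg ▸ hsub
        rw [show ((0 : ℕ) : WithBot ℕ) = 0 from rfl, Nat.WithBot.lt_zero_iff] at h1
        exact Polynomial.degree_eq_bot.mp h1
      have hs' : s = (0 : Polynomial ℝ) + C c * p j := by
        rw [zero_add]; exact sub_eq_zero.mp ht0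
      rw [hs', pip_comb]
      have hne : Fin.last d ≠ j := by
        intro h; apply absurd (congrArg Fin.val h); simp [hj, Fin.last]; omega
      rw [hporth _ _ hne]
      simp [pip]
  | succ N ih =>
    intro s hs hsd
    rcases eq_or_ne s 0 with rfl | hs0
    · simp [pip]
    rcases Nat.lt_or_ge s.natDegree (N + 1) with hlt | hge
    · exact ih s (by omega) hsd
    have hNdeg : s.natDegree = N + 1 := le_antisymm hs hge
    have hdeg : s.degree = ((N + 1 : ℕ) : WithBot ℕ) := by
      rw [Polynomial.degree_eq_natDegree hs0, hNdeg]
    have hNd : N + 1 < d := by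
      have := hdeg ▸ hsd
      exact_mod_cast this
    set j : Fin (d + 1) := ⟨N + 1, by omega⟩ with hj
    have hpj : (p j).degree = ((N + 1 : ℕ) : WithBot ℕ) := hpdeg j
    have hpj0 : p j ≠ 0 := fun h => by
      rw [h, Polynomial.degree_zero] at hpj
      exact absurd hpj.symm (by exact_mod_cast WithBot.coe_ne_bot)
    set c : ℝ := s.leadingCoeff / (p j).leadingCoeff with hc
    have hlc : (p j).leadingCoeff ≠ 0 := Polynomial.leadingCoeff_ne_zero.mpr hpj0
    have hcn : c ≠ 0 := div_ne_zero (Polynomial.leadingCoeff_ne_zero.mpr hs0) hlc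
    have hdegC : (C c * p j).degree = s.degree := by
      rw [Polynomial.degree_C_mul hcn, hpj, hdeg]
    have hlcC : s.leadingCoeff = (C c * p j).leadingCoeff := by
      rw [Polynomial.leadingCoeff_mul, Polynomial.leadingCoeff_C, hc,
        div_mul_cancel₀ _ hlc]
    have hsub : (s - C c * p j).degree < s.degree :=
      Polynomial.degree_sub_lt hdegC.symm hs0 hlcC
    set t : Polynomial ℝ := s - C c * p j with htdef
    have htN : t.natDegree ≤ N := by
      rcases eq_or_ne t 0 with h | h
      · simp [h]
      · have : t.natDegree < N + 1 := by
          rw [Polynomial.natDegree_lt_iff_degree_lt h, ← hdeg]; exact hsub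
        omega
    have htd : t.degree < (d : ℕ) := lt_trans (hdeg ▸ hsub) (by exact_mod_cast hNd)
    have hs' : s = t + C c * p j := by rw [htdef]; ring
    have hne : Fin.last d ≠ j := by
      intro h; apply absurd (congrArg Fin.val h); simp [hj, Fin.last]; omega
    rw [hs', pip_comb, ih t htN htd, hporth _ _ hne]
    ring

/-- the multiplicity formula (−1)^i p_d(λᵢ) πᵢ mᵢ = p_d(λ₀) π₀ for i = 1,…,d. -/
theorem stmt9
    {V : Type*} [Fintype V] [DecidableEq V] (G : SimpleGraph V) (n d k : ℕ)
    (hn : Fintype.card V = n) (hconn : G.Connected) (hreg : G.IsRegularOfDegree k)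
    (lam : Fin (d + 1) → ℝ) (m : Fin (d + 1) → ℕ)
    (hlam : StrictAnti lam) (hlamk : lam 0 = (k : ℝ))
    (hm0 : m 0 = 1) (hmpos : ∀ i, 0 < m i)
    (hcp : (G.adjMatrix ℝ).charpoly = ∏ i : Fin (d + 1), (X - C (lam i)) ^ m i)
    (p : Fin (d + 1) → Polynomial ℝ)
    (hpdeg : ∀ i : Fin (d + 1), (p i).degree = (i : ℕ))
    (hporth : ∀ i j : Fin (d + 1), i ≠ j → pip n m lam (p i) (p j) = 0)
    (hpnorm : ∀ i : Fin (d + 1), pip n m lam (p i) (p i) = (p i).eval (lam 0)) :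
    ∀ i : Fin (d + 1), i ≠ 0 →
      (-1 : ℝ) ^ (i : ℕ) * (p (Fin.last d)).eval (lam i) * pim lam i * (m i : ℝ) =
        (p (Fin.last d)).eval (lam 0) * pim lam 0 := by
  intro i hi
  have hipos : 0 < (i : ℕ) := Fin.pos_iff_ne_zero' i |>.mpr hi
  have hdpos : 0 < d := by have := i.isLt; omega
  have hnpos : 0 < n := by
    have : Nonempty V := hconn.nonempty
    rw [← hn]; exact Fintype.card_pos
  set pd := p (Fin.last d) with hpd
  set S : Finset (Fin (d + 1)) := (univ.erase 0).erase i with hS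
  have hiu : i ∈ univ.erase (0 : Fin (d + 1)) := mem_erase.mpr ⟨hi, mem_univ i⟩
  set s : Polynomial ℝ := ∏ j ∈ S, (X - C (lam j)) with hs
  have hScard : S.card = d - 1 := by
    rw [hS, card_erase_of_mem hiu, card_erase_of_mem (mem_univ _), card_univ, Fintype.card_fin]
    omega
  have hsdeg : s.degree = ((d - 1 : ℕ) : WithBot ℕ) := by
    rw [hs, Polynomial.degree_prod, ← hScard]
    simp [Polynomial.degree_X_sub_C]
  have hzero : pip n m lam pd s = 0 := by
    apply orth_low n m lam p hpdeg hporth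
    rw [hsdeg]; exact_mod_cast Nat.sub_lt hdpos one_pos
  have hseval : ∀ x : ℝ, s.eval x = ∏ j ∈ S, (x - lam j) := by
    intro x; simp [hs, Polynomial.eval_prod]
  have hsum : ∑ j : Fin (d + 1), (m j : ℝ) * pd.eval (lam j) * s.eval (lam j) = 0 := by
    have := hzero
    rw [pip] at this
    rcases mul_eq_zero.mp this with h | h
    · exfalso; have : (n : ℝ) ≠ 0 := Nat.cast_ne_zero.mpr (by omega); simp [this] at h
    · exact h
  -- the sum reduces to terms j = 0 and j = i
  have hSzero : ∀ j ∈ S, (m j : ℝ) * pd.eval (lam j) * s.eval (lam j) = 0 := by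
    intro j hj
    rw [hseval]
    rw [Finset.prod_eq_zero hj (by ring)]
    ring
  have hsplit : ∑ j : Fin (d + 1), (m j : ℝ) * pd.eval (lam j) * s.eval (lam j) =
      (m 0 : ℝ) * pd.eval (lam 0) * s.eval (lam 0) +
        ((m i : ℝ) * pd.eval (lam i) * s.eval (lam i) +
          ∑ j ∈ S, (m j : ℝ) * pd.eval (lam j) * s.eval (lam j)) := by
    rw [← Finset.add_sum_erase univ _ (mem_univ (0 : Fin (d + 1))),
      ← Finset.add_sum_erase _ _ hiu]
  rw [hsplit, Finset.sum_eq_zero hSzero] at hsum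
  have hm0' : (m 0 : ℝ) = 1 := by rw [hm0]; norm_num
  have habs0 : ∀ j ∈ univ.erase (0 : Fin (d + 1)), |lam 0 - lam j| = lam 0 - lam j := by
    intro j hj
    exact abs_of_pos (sub_pos.mpr (hlam (Fin.pos_of_ne_zero (mem_erase.mp hj).1)))
  have hF1 : pim lam 0 = (lam 0 - lam i) * s.eval (lam 0) := by
    rw [pim, Finset.prod_congr rfl habs0, ← Finset.mul_prod_erase _ _ hiu, hseval]
  have h0mem : (0 : Fin (d + 1)) ∈ univ.erase i := mem_erase.mpr ⟨Ne.symm hi, mem_univ _⟩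
  have hF2a : ∏ j ∈ univ.erase i, (lam i - lam j) = (lam i - lam 0) * s.eval (lam i) := by
    rw [← Finset.mul_prod_erase _ _ h0mem, Finset.erase_right_comm, hseval]
  have hF2b : ∏ j ∈ univ.erase i, (lam i - lam j) = (-1 : ℝ) ^ (i : ℕ) * pim lam i := by
    have hfac : ∀ j ∈ univ.erase i,
        lam i - lam j = (if j < i then (-1 : ℝ) else 1) * |lam i - lam j| := by
      intro j hj
      rcases lt_or_gt_of_ne (mem_erase.mp hj).1 with h | h
      · rw [if_pos h, abs_of_neg (sub_neg.mpr (hlam h))]; ring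
      · rw [if_neg (not_lt.mpr h.le), abs_of_pos (sub_pos.mpr (hlam h))]; ring
    rw [Finset.prod_congr rfl hfac, Finset.prod_mul_distrib, pim]
    congr 1
    have hIio : ((univ.erase i).filter (fun j => j < i)) = Finset.Iio i := by
      ext j
      simp only [Finset.mem_filter, Finset.mem_erase, Finset.mem_Iio, mem_univ, and_true]
      exact ⟨fun h => h.2, fun h => ⟨ne_of_lt h, h⟩⟩
    rw [Finset.prod_ite _ _, Finset.prod_const, Finset.prod_const, hIio, Fin.card_Iio,
      one_pow, mul_one]
  have hE : (-1 : ℝ) ^ (i : ℕ) * pim lam i = (lam i - lam 0) * s.eval (lam i) :=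
    hF2b.symm.trans hF2a
  linear_combination ((m i : ℝ) * pd.eval (lam i)) * hE - pd.eval (lam 0) * hF1 -
    (lam 0 - lam i) * hsum + ((lam 0 - lam i) * pd.eval (lam 0) * s.eval (lam 0)) * hm0'
end SpectralExcessPaper
end

section
/- Let Γ be a connected k-regular graph on n vertices with d+1 distinct eigenvalues λ₀ > λ₁ > ⋯ > λ_d with multiplicities m₀ = 1, m₁, …, m_d, let πᵢ = Π_{j≠i} |λᵢ − λⱼ|, and let p_d be its highest-degree predistance polynomial. Then p_d(λ₀) = n·(Σ_{i=0}^{d} π₀²/(mᵢπᵢ²))^{-1}. -/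
open Polynomial Finset
open scoped Classical

namespace SpectralExcessPaper

variable {V : Type*}

section Aux

variable {n d : ℕ} {m : Fin (d + 1) → ℕ} {lam : Fin (d + 1) → ℝ}

lemma pip_add_right (r a b : ℝ[X]) :
    pip n m lam r (a + b) = pip n m lam r a + pip n m lam r b := by
  simp only [pip, eval_add, Finset.mul_sum, ← Finset.sum_add_distrib]
  exact Finset.sum_congr rfl fun i _ => by ring

lemma pip_smul_right (r a : ℝ[X]) (c : ℝ) :
    pip n m lam r (C c * a) = c * pip n m lam r a := by
  simp only [pip, eval_mul, eval_C, Finset.mul_sum]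
  exact Finset.sum_congr rfl fun i _ => by ring

lemma pip_zero_right (r : ℝ[X]) : pip n m lam r 0 = 0 := by simp [pip]

lemma pip_orth_of_degree_lt (p : Fin (d + 1) → Polynomial ℝ)
    (hpdeg : ∀ i : Fin (d + 1), (p i).degree = (i : ℕ))
    (hporth : ∀ j : Fin (d + 1), Fin.last d ≠ j → pip n m lam (p (Fin.last d)) (p j) = 0) :
    ∀ q : ℝ[X], q.degree < (d : ℕ) → pip n m lam (p (Fin.last d)) q = 0 := by
  have hpne : ∀ i, p i ≠ 0 := by
    intro i h
    have := hpdeg i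
    rw [h, degree_zero] at this
    exact absurd this (by simp)
  suffices H : ∀ N : ℕ, ∀ q : ℝ[X], q.natDegree < N → q.degree < (d : ℕ) →
      pip n m lam (p (Fin.last d)) q = 0 by
    intro q hq
    exact H (q.natDegree + 1) q (Nat.lt_succ_self _) hq
  intro N
  induction N with
  | zero => intro q h; omega
  | succ N IH =>
    intro q hqN hqd
    by_cases hq0 : q = 0
    · rw [hq0]; exact pip_zero_right _
    set e := q.natDegree with he
    have hdeg : q.degree = (e : ℕ) := degree_eq_natDegree hq0
    have hed : e < d := by
      rw [hdeg] at hqd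
      exact_mod_cast hqd
    set i : Fin (d + 1) := ⟨e, by omega⟩ with hi
    have hlcne : (p i).leadingCoeff ≠ 0 := leadingCoeff_ne_zero.mpr (hpne i)
    set cst : ℝ := q.leadingCoeff / (p i).leadingCoeff with hcst
    have hcstne : cst ≠ 0 := div_ne_zero (leadingCoeff_ne_zero.mpr hq0) hlcne
    have hdegC : (C cst * p i).degree = q.degree := by
      rw [degree_C_mul hcstne, hpdeg i, hdeg]
    have hlc : q.leadingCoeff = (C cst * p i).leadingCoeff := by
      rw [leadingCoeff_mul, leadingCoeff_C, hcst, div_mul_cancel₀ _ hlcne]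
    have hlt : (q - C cst * p i).degree < q.degree := degree_sub_lt hdegC.symm hq0 hlc
    have hqsplit : q = (q - C cst * p i) + C cst * p i := by ring
    rw [hqsplit, pip_add_right, pip_smul_right]
    have hlast : Fin.last d ≠ i := by
      intro h
      have : (Fin.last d : ℕ) = (i : ℕ) := by rw [h]
      simp [Fin.last, hi] at this
      omega
    rw [hporth i hlast, mul_zero, add_zero]
    by_cases hq'0 : q - C cst * p i = 0
    · rw [hq'0]; exact pip_zero_right _
    · refine IH _ ?_ (lt_trans hlt hqd)
      have := natDegree_lt_natDegree hq'0 hlt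
      omega

end Aux

/-- the spectral excess p_d(λ₀) = n·(Σᵢ π₀²/(mᵢπᵢ²))⁻¹. -/
theorem stmt10
    {V : Type*} [Fintype V] [DecidableEq V] (G : SimpleGraph V) (n d k : ℕ)
    (hn : Fintype.card V = n) (hconn : G.Connected) (hreg : G.IsRegularOfDegree k)
    (lam : Fin (d + 1) → ℝ) (m : Fin (d + 1) → ℕ)
    (hlam : StrictAnti lam) (hlamk : lam 0 = (k : ℝ))
    (hm0 : m 0 = 1) (hmpos : ∀ i, 0 < m i)
    (hcp : (G.adjMatrix ℝ).charpoly = ∏ i : Fin (d + 1), (X - C (lam i)) ^ m i)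
    (p : Fin (d + 1) → Polynomial ℝ)
    (hpdeg : ∀ i : Fin (d + 1), (p i).degree = (i : ℕ))
    (hporth : ∀ i j : Fin (d + 1), i ≠ j → pip n m lam (p i) (p j) = 0)
    (hpnorm : ∀ i : Fin (d + 1), pip n m lam (p i) (p i) = (p i).eval (lam 0)) :
    (p (Fin.last d)).eval (lam 0) =
      (n : ℝ) * (∑ i : Fin (d + 1), pim lam 0 ^ 2 / ((m i : ℝ) * pim lam i ^ 2))⁻¹ := by
  have hinj : Function.Injective lam := hlam.injective
  have hnpos : (0 : ℝ) < n := by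
    have h1 : Nonempty V := hconn.nonempty
    have h2 : 0 < Fintype.card V := Fintype.card_pos
    rw [hn] at h2
    exact_mod_cast h2
  have hnne : (n : ℝ) ≠ 0 := ne_of_gt hnpos
  set r : ℝ[X] := p (Fin.last d) with hr
  have hrne : r ≠ 0 := by
    intro h
    have := hpdeg (Fin.last d)
    rw [← hr, h, degree_zero] at this
    exact absurd this (by simp)
  set P : Fin (d + 1) → ℝ := fun i => ∏ j ∈ univ.erase i, (lam i - lam j) with hP
  have hPne : ∀ i, P i ≠ 0 := by
    intro i
    refine Finset.prod_ne_zero_iff.mpr fun j hj => sub_ne_zero.mpr ?_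
    exact hinj.ne (Ne.symm (Finset.ne_of_mem_erase hj))
  have hmne : ∀ i, (m i : ℝ) ≠ 0 := fun i => Nat.cast_ne_zero.mpr (hmpos i).ne' 
  have hPabs : ∀ i, pim lam i = |P i| := by
    intro i
    rw [pim, hP, Finset.abs_prod]
  have hPsq : ∀ i, pim lam i ^ 2 = P i ^ 2 := fun i => by rw [hPabs, sq_abs]
  have hP0 : P 0 = pim lam 0 := by
    rw [pim, hP]
    refine Finset.prod_congr rfl fun j hj => ?_
    have hj0 : j ≠ 0 := Finset.ne_of_mem_erase hj
    have : lam j < lam 0 := hlam (Fin.pos_of_ne_zero hj0)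
    rw [abs_of_pos (by linarith)]
  -- orthogonality to all lower-degree polynomials
  have horthall := pip_orth_of_degree_lt p hpdeg (fun j hj => hporth _ j hj)
  -- pairwise relation
  have hpair : ∀ i j : Fin (d + 1), i ≠ j →
      (m i : ℝ) * r.eval (lam i) * P i = (m j : ℝ) * r.eval (lam j) * P j := by
    intro i j hij
    have hd1 : 1 ≤ d := by
      rcases Nat.eq_zero_or_pos d with h | h
      · subst h; exact absurd (Fin.ext (by omega : (i : ℕ) = (j : ℕ))) hij
      · exact h
    set s : Finset (Fin (d + 1)) := (univ.erase i).erase j with hs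
    have hjmem : j ∈ univ.erase i := Finset.mem_erase.mpr ⟨hij.symm, Finset.mem_univ j⟩
    have himem : i ∈ univ.erase j := Finset.mem_erase.mpr ⟨hij, Finset.mem_univ i⟩
    set q : ℝ[X] := ∏ t ∈ s, (X - C (lam t)) with hq
    have hqmonic : q.Monic := monic_prod_of_monic _ _ fun t _ => monic_X_sub_C _
    have hscard : s.card = d - 1 := by
      rw [hs, Finset.card_erase_of_mem hjmem, Finset.card_erase_of_mem (Finset.mem_univ i),
        Finset.card_univ, Fintype.card_fin]
      omega
    have hqnat : q.natDegree = d - 1 := by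
      rw [hq, natDegree_prod _ _ fun t _ => X_sub_C_ne_zero _]
      simp [hscard]
    have hqdeg : q.degree < (d : ℕ) := by
      rw [degree_eq_natDegree hqmonic.ne_zero, hqnat]
      exact_mod_cast Nat.sub_lt (by omega) one_pos
    have h0 := horthall q hqdeg
    rw [pip] at h0
    have hsum : ∑ l : Fin (d + 1), (m l : ℝ) * r.eval (lam l) * q.eval (lam l) = 0 := by
      rcases mul_eq_zero.mp h0 with h | h
      · exact absurd h (by positivity)
      · exact h
    have hqeval : ∀ x : ℝ, q.eval x = ∏ t ∈ s, (x - lam t) := by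
      intro x; rw [hq, eval_prod]; simp
    set f : Fin (d + 1) → ℝ := fun l => (m l : ℝ) * r.eval (lam l) * q.eval (lam l) with hf
    have hfs : ∀ l ∈ s, f l = 0 := by
      intro l hl
      have : q.eval (lam l) = 0 := by
        rw [hqeval]
        exact Finset.prod_eq_zero hl (by ring)
      simp [hf, this]
    have hsplit : f i + f j = 0 := by
      have h3 : ∑ l ∈ s, f l = 0 := Finset.sum_eq_zero hfs
      have h2 : f j + ∑ l ∈ s, f l = ∑ l ∈ univ.erase i, f l := by
        rw [hs]; exact Finset.add_sum_erase _ f hjmem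
      have h1 : f i + ∑ l ∈ univ.erase i, f l = ∑ l : Fin (d + 1), f l :=
        Finset.add_sum_erase _ f (Finset.mem_univ i)
      rw [h3, add_zero] at h2
      rw [← h2, hsum] at h1
      exact h1
    have hPi : P i = (lam i - lam j) * q.eval (lam i) := by
      rw [hqeval]
      show ∏ t ∈ univ.erase i, (lam i - lam t) = _
      rw [show (univ.erase i) = insert j s from by rw [hs, Finset.insert_erase hjmem]]
      exact Finset.prod_insert (by rw [hs]; exact Finset.notMem_erase j _)
    have hPj : P j = (lam j - lam i) * q.eval (lam j) := by
      rw [hqeval]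
      have hs' : s = (univ.erase j).erase i := by rw [hs, Finset.erase_right_comm]
      show ∏ t ∈ univ.erase j, (lam j - lam t) = _
      rw [show (univ.erase j) = insert i s from by rw [hs', Finset.insert_erase himem]]
      exact Finset.prod_insert (by rw [hs']; exact Finset.notMem_erase i _)
    have hfi : f i = (m i : ℝ) * r.eval (lam i) * q.eval (lam i) := rfl
    have hfj : f j = (m j : ℝ) * r.eval (lam j) * q.eval (lam j) := rfl
    rw [hPi, hPj]
    rw [hfi, hfj] at hsplit
    linear_combination (lam i - lam j) * hsplit
  -- the constant
  set c : ℝ := (m 0 : ℝ) * r.eval (lam 0) * P 0 with hc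
  have hkey : ∀ i, (m i : ℝ) * r.eval (lam i) * P i = c := by
    intro i
    by_cases h : i = 0
    · rw [h, hc]
    · exact hpair i 0 h
  have hcne : c ≠ 0 := by
    intro h
    have hz : ∀ i, r.eval (lam i) = 0 := by
      intro i
      have := hkey i
      rw [h] at this
      have := mul_eq_zero.mp this
      rcases this with h1 | h1
      · rcases mul_eq_zero.mp h1 with h2 | h2
        · exact absurd h2 (hmne i)
        · exact h2
      · exact absurd h1 (hPne i)
    have : r = 0 := by
      apply Polynomial.eq_zero_of_natDegree_lt_card_of_eval_eq_zero r hinj hz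
      have : r.degree = (d : ℕ) := by rw [hr, hpdeg]; simp [Fin.last]
      have hnat : r.natDegree = d := natDegree_eq_of_degree_eq_some this
      simp [hnat]
    exact hrne this
  have hval : ∀ i, r.eval (lam i) = c / ((m i : ℝ) * P i) := by
    intro i
    rw [eq_div_iff (mul_ne_zero (hmne i) (hPne i))]
    rw [← hkey i]; ring
  set S : ℝ := ∑ i : Fin (d + 1), 1 / ((m i : ℝ) * P i ^ 2) with hS
  have hSpos : 0 < S := by
    rw [hS]
    apply Finset.sum_pos
    · intro i _
      have h1 : (0:ℝ) < m i := by exact_mod_cast hmpos i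
      have h2 : (0:ℝ) < P i ^ 2 := by
        calc (0:ℝ) < |P i| ^ 2 := by
              have := abs_pos.mpr (hPne i); positivity
          _ = P i ^ 2 := sq_abs _
      exact div_pos one_pos (mul_pos h1 h2)
    · exact Finset.univ_nonempty
  have hSne : S ≠ 0 := ne_of_gt hSpos
  have hnorm := hpnorm (Fin.last d)
  rw [← hr, pip] at hnorm
  have hsumval : ∑ i : Fin (d + 1), (m i : ℝ) * r.eval (lam i) * r.eval (lam i)
      = c ^ 2 * S := by
    rw [hS, Finset.mul_sum]
    refine Finset.sum_congr rfl fun i _ => ?_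
    rw [hval i]
    field_simp [hmne i, hPne i]
  rw [hsumval] at hnorm
  have hr0 : r.eval (lam 0) = c / P 0 := by
    rw [hval 0, hm0]; push_cast; rw [one_mul]
  rw [hr0] at hnorm
  -- hnorm : 1/n * (c^2 * S) = c / P 0
  have heqc : (n : ℝ) = c * S * P 0 := by
    have hdd : (c ^ 2 * S) / (n : ℝ) = c / P 0 := by rw [← hnorm]; ring
    rw [div_eq_div_iff hnne (hPne 0)] at hdd
    have h3 : c * (c * S * P 0) = c * (n : ℝ) := by linear_combination hdd
    exact (mul_left_cancel₀ hcne h3).symm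
  have hgoal : (∑ i : Fin (d + 1), pim lam 0 ^ 2 / ((m i : ℝ) * pim lam i ^ 2))
      = P 0 ^ 2 * S := by
    rw [hS, Finset.mul_sum]
    refine Finset.sum_congr rfl fun i _ => ?_
    rw [hPsq i, hPsq 0, mul_one_div]
  rw [hgoal, hr0, heqc]
  have hne2 : P 0 ^ 2 * S ≠ 0 := mul_ne_zero (pow_ne_zero 2 (hPne 0)) hSne
  rw [inv_eq_one_div, mul_one_div, div_eq_div_iff (hPne 0) hne2]
  ring
end SpectralExcessPaper
end

section
/- Let Γ be a connected k-regular graph on n vertices with d+1 distinct eigenvalues λ₀ > λ₁ > ⋯ > λ_d and predistance polynomials p₀, p₁, …, p_d, and for each i set qᵢ = p₀ + p₁ + ⋯ + pᵢ. Then for every i = 0, …, d: qᵢ(λ₀)²/‖qᵢ‖²_Γ = qᵢ(λ₀), and for every nonzero real polynomial r of degree at most i, r(λ₀)²/‖r‖²_Γ ≤ qᵢ(λ₀), with equality if and only if r is a nonzero scalar multiple of qᵢ. -/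
open Polynomial Finset
open scoped Classical

namespace SpectralExcessPaper

variable {V : Type*}

/- ===== auxiliary lemmas ===== -/

section Aux

variable {d : ℕ} (n : ℕ) (m : Fin (d + 1) → ℕ) (lam : Fin (d + 1) → ℝ)

lemma pip_comm (r s : Polynomial ℝ) : pip n m lam r s = pip n m lam s r := by
  unfold pip
  congr 1
  exact Finset.sum_congr rfl fun i _ => by ring

lemma pip_sum_left {ι : Type*} (S : Finset ι) (f : ι → Polynomial ℝ) (s : Polynomial ℝ) :
    pip n m lam (∑ j ∈ S, f j) s = ∑ j ∈ S, pip n m lam (f j) s := by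
  unfold pip
  rw [← Finset.mul_sum, ← Finset.sum_comm]
  congr 1
  refine Finset.sum_congr rfl fun i _ => ?_
  rw [eval_finset_sum, Finset.mul_sum, Finset.sum_mul]

lemma pip_smul_left (c : ℝ) (r s : Polynomial ℝ) :
    pip n m lam (c • r) s = c * pip n m lam r s := by
  unfold pip
  rw [Finset.mul_sum, Finset.mul_sum, Finset.mul_sum]
  refine Finset.sum_congr rfl fun i _ => ?_
  simp [eval_smul]
  ring

lemma pip_sub_smul (t : ℝ) (r q : Polynomial ℝ) :
    pip n m lam (r - t • q) (r - t • q) =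
      pip n m lam r r - 2 * t * pip n m lam r q + t ^ 2 * pip n m lam q q := by
  unfold pip
  have h : ∀ i : Fin (d + 1),
      (m i : ℝ) * (r.eval (lam i) - t * q.eval (lam i)) * (r.eval (lam i) - t * q.eval (lam i)) =
        (m i : ℝ) * r.eval (lam i) * r.eval (lam i)
          - 2 * t * ((m i : ℝ) * r.eval (lam i) * q.eval (lam i))
          + t ^ 2 * ((m i : ℝ) * q.eval (lam i) * q.eval (lam i)) := fun i => by ring
  simp only [eval_sub, eval_smul, smul_eq_mul]
  rw [Finset.sum_congr rfl fun i _ => h i, Finset.sum_add_distrib, Finset.sum_sub_distrib,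
    ← Finset.mul_sum, ← Finset.mul_sum]
  ring

lemma pip_pos (hn : 0 < n) (hmpos : ∀ i, 0 < m i) (hlam : StrictAnti lam)
    {r : Polynomial ℝ} (hr : r ≠ 0) (hdeg : r.natDegree ≤ d) :
    0 < pip n m lam r r := by
  have hinj : Function.Injective lam := hlam.injective
  have hex : ∃ i, r.eval (lam i) ≠ 0 := by
    by_contra h
    push_neg at h
    exact hr (Polynomial.eq_zero_of_natDegree_lt_card_of_eval_eq_zero r hinj h
      (by simpa using Nat.lt_succ_of_le hdeg))
  obtain ⟨i0, hi0⟩ := hex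
  have hpos : 0 < ∑ i : Fin (d + 1), (m i : ℝ) * r.eval (lam i) * r.eval (lam i) := by
    refine Finset.sum_pos' (fun i _ => ?_) ⟨i0, Finset.mem_univ i0, ?_⟩
    · rw [mul_assoc]
      exact mul_nonneg (by positivity) (mul_self_nonneg _)
    · rw [mul_assoc]
      exact mul_pos (by exact_mod_cast hmpos i0) ((mul_self_pos).2 hi0)
  unfold pip
  positivity

lemma span_lemma (p : Fin (d + 1) → Polynomial ℝ)
    (hpdeg : ∀ i : Fin (d + 1), (p i).degree = (i : ℕ)) :
    ∀ i : Fin (d + 1), ∀ r : Polynomial ℝ, r.degree ≤ (i : ℕ) →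
      ∃ c : Fin (d + 1) → ℝ, r = ∑ j ∈ univ.filter (fun j => j ≤ i), c j • p j := by
  intro i
  induction i using Fin.induction with
  | zero =>
    intro r hr
    obtain ⟨b, hb⟩ : ∃ b, p 0 = C b :=
      ⟨(p 0).coeff 0, Polynomial.eq_C_of_degree_le_zero (le_of_eq (hpdeg 0))⟩
    have hp0 : b ≠ 0 := by
      intro h
      have h0 := hpdeg 0
      rw [hb, h, map_zero, Polynomial.degree_zero] at h0
      exact absurd h0.symm (by simp)
    refine ⟨fun _ => r.coeff 0 / b, ?_⟩
    have hfilter : (univ.filter (fun j : Fin (d + 1) => j ≤ 0)) = {0} := by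
      ext j; simp [Fin.le_zero_iff]
    rw [hfilter, Finset.sum_singleton]
    show r = (r.coeff 0 / b) • p 0
    rw [hb, smul_C, smul_eq_mul, div_mul_cancel₀ _ hp0]
    exact Polynomial.eq_C_of_degree_le_zero hr
  | succ i ih =>
    intro r hr
    have hdegsucc : ((i.succ : Fin (d + 1)) : ℕ) = (i : ℕ) + 1 := rfl
    have hpne : (p i.succ).coeff ((i : ℕ) + 1) ≠ 0 := by
      have h1 : (p i.succ).natDegree = (i : ℕ) + 1 := by
        rw [Polynomial.natDegree, hpdeg i.succ, hdegsucc]; rfl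
      have h2 : (p i.succ) ≠ 0 := by
        intro h
        have h0 := hpdeg i.succ
        rw [h, Polynomial.degree_zero] at h0
        exact absurd h0.symm (by simp)
      rw [← h1]
      exact Polynomial.leadingCoeff_ne_zero.2 h2
    set a : ℝ := r.coeff ((i : ℕ) + 1) / (p i.succ).coeff ((i : ℕ) + 1) with ha
    set t : Polynomial ℝ := r - a • p i.succ with htdef
    have htdeg : t.degree ≤ ((i : ℕ) : WithBot ℕ) := by
      rw [Polynomial.degree_le_iff_coeff_zero]
      intro mm hmm
      have hmm' : (i : ℕ) < mm := by exact_mod_cast hmm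
      rcases eq_or_lt_of_le (Nat.succ_le_of_lt hmm') with heq | hlt
      · have : mm = (i : ℕ) + 1 := heq.symm
        subst this
        simp only [htdef, Polynomial.coeff_sub, Polynomial.coeff_smul, smul_eq_mul, ha]
        rw [div_mul_cancel₀ _ hpne]
        ring
      · have h1 : r.coeff mm = 0 := by
          apply Polynomial.coeff_eq_zero_of_degree_lt
          calc r.degree ≤ ((i : ℕ) + 1 : ℕ) := by exact_mod_cast hr
            _ < (mm : WithBot ℕ) := by exact_mod_cast hlt
        have h2 : (p i.succ).coeff mm = 0 := by
          apply Polynomial.coeff_eq_zero_of_degree_lt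
          rw [hpdeg i.succ, hdegsucc]
          exact_mod_cast hlt
        simp [htdef, h1, h2]
    obtain ⟨c, hc⟩ := ih t htdeg
    refine ⟨fun j => if j = i.succ then a else c j, ?_⟩
    have hnotmem : i.succ ∉ univ.filter (fun j : Fin (d + 1) => j ≤ i.castSucc) := by
      simp only [Finset.mem_filter, Finset.mem_univ, true_and]
      rw [Fin.le_castSucc_iff]
      exact lt_irrefl _
    have hfilter : (univ.filter (fun j : Fin (d + 1) => j ≤ i.succ)) =
        insert i.succ (univ.filter (fun j : Fin (d + 1) => j ≤ i.castSucc)) := by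
      ext j
      simp only [Finset.mem_filter, Finset.mem_univ, true_and, Finset.mem_insert]
      rw [Fin.le_castSucc_iff]
      constructor
      · intro h; rcases eq_or_lt_of_le h with h' | h'
        · exact Or.inl h'
        · exact Or.inr h'
      · rintro (h | h)
        · exact le_of_eq h
        · exact le_of_lt h
    rw [hfilter, Finset.sum_insert hnotmem]
    have hrest : ∑ j ∈ univ.filter (fun j : Fin (d + 1) => j ≤ i.castSucc),
        (if j = i.succ then a else c j) • p j =
        ∑ j ∈ univ.filter (fun j : Fin (d + 1) => j ≤ i.castSucc), c j • p j := by
      refine Finset.sum_congr rfl fun j hj => ?_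
      have : j ≠ i.succ := by
        intro h; rw [h] at hj; exact hnotmem hj
      rw [if_neg this]
    rw [hrest, ← hc]
    show r = (if i.succ = i.succ then a else c i.succ) • p i.succ + t
    rw [if_pos rfl, htdef]
    ring

end Aux

/-- each qᵢ = p₀ + ⋯ + pᵢ satisfies qᵢ(λ₀)²/‖qᵢ‖² = qᵢ(λ₀) and maximizes
r(λ₀)²/‖r‖² over nonzero polynomials r of degree ≤ i, with equality iff r is a nonzero
multiple of qᵢ. -/
theorem stmt13
    {V : Type*} [Fintype V] [DecidableEq V] (G : SimpleGraph V) (n d k : ℕ)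
    (hn : Fintype.card V = n) (hconn : G.Connected) (hreg : G.IsRegularOfDegree k)
    (lam : Fin (d + 1) → ℝ) (m : Fin (d + 1) → ℕ)
    (hlam : StrictAnti lam) (hlamk : lam 0 = (k : ℝ))
    (hm0 : m 0 = 1) (hmpos : ∀ i, 0 < m i)
    (hcp : (G.adjMatrix ℝ).charpoly = ∏ i : Fin (d + 1), (X - C (lam i)) ^ m i)
    (p : Fin (d + 1) → Polynomial ℝ)
    (hpdeg : ∀ i : Fin (d + 1), (p i).degree = (i : ℕ))
    (hporth : ∀ i j : Fin (d + 1), i ≠ j → pip n m lam (p i) (p j) = 0)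
    (hpnorm : ∀ i : Fin (d + 1), pip n m lam (p i) (p i) = (p i).eval (lam 0)) :
    ∀ i : Fin (d + 1),
      ((qsum p i).eval (lam 0)) ^ 2 / pip n m lam (qsum p i) (qsum p i) =
        (qsum p i).eval (lam 0) ∧
      ∀ r : Polynomial ℝ, r ≠ 0 → r.degree ≤ (i : ℕ) →
        (r.eval (lam 0)) ^ 2 / pip n m lam r r ≤ (qsum p i).eval (lam 0) ∧
        ((r.eval (lam 0)) ^ 2 / pip n m lam r r = (qsum p i).eval (lam 0) ↔
          ∃ c : ℝ, c ≠ 0 ∧ r = c • qsum p i) := by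
  -- basic positivity setup
  have hVne : Nonempty V := hconn.nonempty
  have hnpos : 0 < n := by
    rw [← hn]; exact Fintype.card_pos
  have hppos : ∀ j : Fin (d + 1), 0 < (p j).eval (lam 0) := by
    intro j
    rw [← hpnorm j]
    refine pip_pos n m lam hnpos hmpos hlam (fun h => ?_) ?_
    · have := hpdeg j; rw [h] at this; simp at this
    · have := Polynomial.natDegree_le_iff_degree_le.2 (le_of_eq (hpdeg j))
      exact le_trans this (Nat.le_of_lt_succ j.isLt)
  intro i
  set q : Polynomial ℝ := qsum p i with hq
  -- pip (p j) q = (p j).eval (lam 0) for j ≤ i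
  have hpjq : ∀ j ∈ univ.filter (fun j : Fin (d + 1) => j ≤ i),
      pip n m lam (p j) q = (p j).eval (lam 0) := by
    intro j hj
    rw [hq, qsum, pip_comm, pip_sum_left]
    rw [Finset.sum_eq_single_of_mem j hj (fun l _ hlj => hporth l j hlj)]
    rw [pip_comm]
    exact hpnorm j
  -- q evaluation
  have hqeval : q.eval (lam 0) = ∑ j ∈ univ.filter (fun j : Fin (d + 1) => j ≤ i),
      (p j).eval (lam 0) := by
    rw [hq, qsum, eval_finset_sum]
  have hQ : pip n m lam q q = q.eval (lam 0) := by
    have h1 : pip n m lam q q = ∑ j ∈ univ.filter (fun j : Fin (d + 1) => j ≤ i),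
        pip n m lam (p j) q := by
      conv_lhs => rw [hq, qsum]
      exact pip_sum_left n m lam _ _ _
    rw [h1, hqeval]
    exact Finset.sum_congr rfl fun j hj => hpjq j hj
  have hQpos : 0 < q.eval (lam 0) := by
    rw [hqeval]
    refine Finset.sum_pos (fun j _ => hppos j) ⟨0, by simp [Fin.zero_le]⟩
  have hQne : q.eval (lam 0) ≠ 0 := ne_of_gt hQpos
  -- q degree
  have hqdeg : q.degree ≤ ((i : ℕ) : WithBot ℕ) := by
    rw [hq, qsum]
    refine le_trans (Polynomial.degree_sum_le _ _) ?_
    refine Finset.sup_le fun j hj => ?_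
    rw [hpdeg j]
    simp only [Finset.mem_filter] at hj
    exact_mod_cast (Fin.le_iff_val_le_val.1 hj.2)
  constructor
  · rw [hQ, sq, mul_div_assoc, div_self hQne, mul_one]
  · intro r hr hrdeg
    -- r.eval (lam 0) = pip r q
    obtain ⟨c, hc⟩ := span_lemma p hpdeg i r hrdeg
    have hE : r.eval (lam 0) = pip n m lam r q := by
      conv_lhs => rw [hc]
      conv_rhs => rw [hc]
      rw [pip_sum_left, eval_finset_sum]
      refine Finset.sum_congr rfl fun j hj => ?_
      rw [eval_smul, pip_smul_left, hpjq j hj, smul_eq_mul]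
    set E : ℝ := pip n m lam r q with hEdef
    set Q : ℝ := q.eval (lam 0) with hQdef
    set N2 : ℝ := pip n m lam r r with hN2def
    have hrnat : r.natDegree ≤ d := by
      have := Polynomial.natDegree_le_iff_degree_le.2 hrdeg
      exact le_trans this (Nat.le_of_lt_succ i.isLt)
    have hN2pos : 0 < N2 := pip_pos n m lam hnpos hmpos hlam hr hrnat
    -- discriminant bound with t = E / Q
    have hs : pip n m lam (r - (E / Q) • q) (r - (E / Q) • q) = N2 - E ^ 2 / Q := by
      rw [pip_sub_smul]
      rw [hQ, ← hN2def, ← hEdef]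
      field_simp
      ring
    have hsnonneg : 0 ≤ N2 - E ^ 2 / Q := by
      rw [← hs]
      by_cases hz : r - (E / Q) • q = 0
      · rw [hz]; unfold pip; simp
      · refine le_of_lt (pip_pos n m lam hnpos hmpos hlam hz ?_)
        have hdq : (r - (E / Q) • q).degree ≤ ((i : ℕ) : WithBot ℕ) :=
          le_trans (Polynomial.degree_sub_le _ _)
            (max_le hrdeg (le_trans (Polynomial.degree_smul_le _ _) hqdeg))
        have := Polynomial.natDegree_le_iff_degree_le.2 hdq
        exact le_trans this (Nat.le_of_lt_succ i.isLt)
    have hkey : E ^ 2 ≤ Q * N2 := by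
      rw [sub_nonneg, div_le_iff₀ hQpos] at hsnonneg
      linarith [hsnonneg]
    constructor
    · rw [hE, div_le_iff₀ hN2pos]
      linarith [hkey]
    · rw [hE]
      constructor
      · intro heq
        have hN2ne : N2 ≠ 0 := ne_of_gt hN2pos
        have hE2 : E ^ 2 = Q * N2 := by
          rw [div_eq_iff hN2ne] at heq
          linarith [heq]
        have hzero : pip n m lam (r - (E / Q) • q) (r - (E / Q) • q) = 0 := by
          rw [hs, hE2]
          field_simp
          ring
        have hsz : r - (E / Q) • q = 0 := by
          by_contra hz
          have hdq : (r - (E / Q) • q).degree ≤ ((i : ℕ) : WithBot ℕ) :=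
            le_trans (Polynomial.degree_sub_le _ _)
              (max_le hrdeg (le_trans (Polynomial.degree_smul_le _ _) hqdeg))
          have hnat := Polynomial.natDegree_le_iff_degree_le.2 hdq
          have := pip_pos n m lam hnpos hmpos hlam hz
            (le_trans hnat (Nat.le_of_lt_succ i.isLt))
          linarith
        have hreq : r = (E / Q) • q := by
          have := sub_eq_zero.1 hsz
          exact this
        have hEne : E ≠ 0 := by
          intro h
          rw [h] at hreq
          simp at hreq
          exact hr hreq
        exact ⟨E / Q, div_ne_zero hEne hQne, hreq⟩
      · rintro ⟨c0, hc0, hrc⟩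
        have hE2 : E = c0 * Q := by
          rw [hEdef, hrc, pip_smul_left, hQ]
        have hN2' : N2 = c0 ^ 2 * Q := by
          rw [hN2def, hrc, pip_smul_left, pip_comm, pip_smul_left, hQ]
          ring
        rw [hE2, hN2']
        field_simp
end SpectralExcessPaper
end
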